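/- Fix M > 0 and b > 0. Let μ and ν be Borel probability measures on [0,M] and let x₁, x₂ satisfy 0 ≤ x₁ < x₂ ≤ M. Then S(x₂,μ) − S(x₁,ν) ≤ b·d_W(μ,ν)/(x₂ − x₁) + d_W(μ,ν) + (x₂ − x₁). -/

import Mathlib

open MeasureTheory

noncomputable section

/-- Cumulative distribution function `F(t) = μ([0,t])`. -/
def cdf0 (μ : Measure ℝ) (t : ℝ) : ℝ := (μ (Set.Icc 0 t)).toReal

/-- Wasserstein-1 distance between measures on `[0,M]`: `∫₀^M |F(t) - H(t)| dt`. -/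
def wassDist (M : ℝ) (μ ν : Measure ℝ) : ℝ :=
  ∫ t in Set.Icc (0:ℝ) M, |cdf0 μ t - cdf0 ν t|

/-- Expected ski-rental cost with buying cost `b`. -/
def skiCost (b x : ℝ) (μ : Measure ℝ) : ℝ :=
  ∫ ξ, (if ξ ≤ x then ξ else b + x) ∂μ

lemma cdf0_mono (μ : Measure ℝ) [IsFiniteMeasure μ] : Monotone (cdf0 μ) := by
  intro s t h
  exact (ENNReal.toReal_le_toReal (measure_ne_top μ _) (measure_ne_top μ _)).2
    (measure_mono (Set.Icc_subset_Icc_right h))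

lemma cdf0_nonneg (μ : Measure ℝ) (t : ℝ) : 0 ≤ cdf0 μ t := ENNReal.toReal_nonneg

lemma cdf0_le_one (μ : Measure ℝ) [IsProbabilityMeasure μ] (t : ℝ) : cdf0 μ t ≤ 1 := by
  have : μ (Set.Icc 0 t) ≤ 1 := prob_le_one
  simpa [cdf0] using ENNReal.toReal_le_of_le_ofReal one_pos.le (by simpa using this)

lemma cdf0_integrableOn (μ : Measure ℝ) [IsProbabilityMeasure μ] (s : Set ℝ)
    (hs : volume s ≠ ⊤) : IntegrableOn (cdf0 μ) s := by
  haveI : IsFiniteMeasure (volume.restrict s) :=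
    ⟨by rw [Measure.restrict_apply_univ]; exact hs.lt_top⟩
  refine Integrable.mono' (integrable_const 1)
    ((cdf0_mono μ).measurable.aestronglyMeasurable) (ae_of_all _ fun t => ?_)
  rw [Real.norm_eq_abs, abs_of_nonneg (cdf0_nonneg μ t)]
  exact cdf0_le_one μ t

lemma compl_null (M : ℝ) (μ : Measure ℝ) [IsProbabilityMeasure μ]
    (hμ : μ (Set.Icc 0 M) = 1) : μ (Set.Icc 0 M)ᶜ = 0 := by
  have h := measure_compl (measurableSet_Icc (a := (0:ℝ)) (b := M)) (measure_ne_top μ _)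
  rw [hμ, measure_univ, tsub_self] at h
  exact h

lemma measure_Iic_eq (M : ℝ) (μ : Measure ℝ) [IsProbabilityMeasure μ]
    (hμ : μ (Set.Icc 0 M) = 1) {t : ℝ} (ht : 0 ≤ t) :
    μ (Set.Iic t) = μ (Set.Icc 0 t) := by
  have hset : Set.Iic t = Set.Icc 0 t ∪ Set.Iio 0 := by
    ext ξ
    simp only [Set.mem_Iic, Set.mem_union, Set.mem_Icc, Set.mem_Iio]
    constructor
    · intro h; by_cases h0 : 0 ≤ ξ
      · exact Or.inl ⟨h0, h⟩
      · exact Or.inr (lt_of_not_ge h0)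
    · rintro (⟨_, h⟩ | h) <;> linarith
  have hnull : μ (Set.Iio 0) = 0 := by
    refine measure_mono_null ?_ (compl_null M μ hμ)
    intro ξ hξ
    simp only [Set.mem_compl_iff, Set.mem_Icc, not_and_or]
    exact Or.inl (not_le.2 hξ)
  rw [hset]
  refine le_antisymm ?_ (measure_mono Set.subset_union_left)
  calc μ (Set.Icc 0 t ∪ Set.Iio 0) ≤ μ (Set.Icc 0 t) + μ (Set.Iio 0) := measure_union_le _ _
  _ = μ (Set.Icc 0 t) := by rw [hnull, add_zero]

/-- The key identity for the ski-rental cost. -/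
lemma skiCost_eq (M b : ℝ) (μ : Measure ℝ) [IsProbabilityMeasure μ]
    (hμ : μ (Set.Icc 0 M) = 1) (x : ℝ) (hx0 : 0 ≤ x) (hxM : x ≤ M) :
    skiCost b x μ = x + b * (1 - cdf0 μ x) - ∫ t in Set.Icc 0 x, cdf0 μ t := by
  haveI : IsFiniteMeasure (volume.restrict (Set.Icc (0:ℝ) x)) :=
    ⟨by rw [Measure.restrict_apply_univ, Real.volume_Icc]; exact ENNReal.ofReal_lt_top⟩
  set τ : Measure ℝ := volume.restrict (Set.Icc (0:ℝ) x) with hτ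
  -- the "rebate" function
  set g : ℝ → ℝ := fun ξ => ∫ t, Set.indicator {q : ℝ × ℝ | q.1 ≤ q.2} (fun _ => (1:ℝ)) (ξ, t) ∂τ
    with hg
  have hmeas : MeasurableSet {q : ℝ × ℝ | q.1 ≤ q.2} :=
    measurableSet_le measurable_fst measurable_snd
  have hint : Integrable (Set.indicator {q : ℝ × ℝ | q.1 ≤ q.2} (fun _ => (1:ℝ))) (μ.prod τ) :=
    (integrable_const 1).indicator hmeas
  -- compute g pointwise for ξ ≥ 0
  have hgval : ∀ ξ : ℝ, 0 ≤ ξ → g ξ = if ξ ≤ x then x - ξ else 0 := by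
    intro ξ hξ
    have h1 : (fun t => Set.indicator {q : ℝ × ℝ | q.1 ≤ q.2} (fun _ => (1:ℝ)) (ξ, t))
        = Set.indicator (Set.Ici ξ) (fun _ => (1:ℝ)) := by
      ext t
      by_cases h : ξ ≤ t <;> simp [Set.indicator, h]
    rw [hg]
    simp only [h1, hτ]
    rw [integral_indicator measurableSet_Ici]
    rw [Measure.restrict_restrict measurableSet_Ici]
    have h2 : Set.Ici ξ ∩ Set.Icc 0 x = Set.Icc ξ x := by
      ext t
      simp only [Set.mem_inter_iff, Set.mem_Ici, Set.mem_Icc]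
      constructor
      · rintro ⟨h1', h2', h3'⟩; exact ⟨h1', h3'⟩
      · rintro ⟨h1', h2'⟩; exact ⟨h1', le_trans hξ h1', h2'⟩
    rw [h2, setIntegral_const, smul_eq_mul, mul_one, measureReal_def, Real.volume_Icc]
    by_cases h : ξ ≤ x
    · rw [if_pos h, ENNReal.toReal_ofReal (by linarith)]
    · rw [if_neg h, ENNReal.ofReal_eq_zero.2 (by linarith), ENNReal.toReal_zero]
  -- integrability of g
  have hgi : Integrable g μ := hint.integral_prod_left
  have hbi : Integrable (Set.indicator (Set.Ioi x) (fun _ => b)) μ :=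
    (integrable_const b).indicator measurableSet_Ioi
  -- a.e. pointwise identity for the cost function
  have hae : ∀ᵐ ξ ∂μ, (if ξ ≤ x then ξ else b + x)
      = x + Set.indicator (Set.Ioi x) (fun _ => b) ξ - g ξ := by
    have hc : μ (Set.Icc 0 M)ᶜ = 0 := compl_null M μ hμ
    filter_upwards [measure_eq_zero_iff_ae_notMem.1 hc] with ξ hξ
    have hξ' : ξ ∈ Set.Icc 0 M := by
      by_contra h; exact hξ h
    have hξ0 : 0 ≤ ξ := hξ'.1
    rw [hgval ξ hξ0]
    by_cases h : ξ ≤ x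
    · rw [if_pos h, if_pos h, Set.indicator_of_notMem (by simpa using h)]
      ring
    · rw [if_neg h, if_neg h, Set.indicator_of_mem (by simpa using lt_of_not_ge h)]
      ring
  -- compute the integral
  have h1 : skiCost b x μ = ∫ ξ, (x + Set.indicator (Set.Ioi x) (fun _ => b) ξ - g ξ) ∂μ :=
    integral_congr_ae hae
  rw [h1, integral_sub (by exact (integrable_const x).add hbi) hgi,
    integral_add (integrable_const x) hbi, integral_const, measureReal_def, measure_univ,
    ENNReal.toReal_one, one_smul, integral_indicator_const _ measurableSet_Ioi, measureReal_def, smul_eq_mul]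
  -- μ (Ioi x) = 1 - cdf0 μ x
  have h2 : (μ (Set.Ioi x)).toReal = 1 - cdf0 μ x := by
    have : Set.Ioi x = (Set.Iic x)ᶜ := (Set.compl_Iic).symm
    rw [this, measure_compl measurableSet_Iic (measure_ne_top μ _), measure_univ,
      measure_Iic_eq M μ hμ hx0]
    rw [ENNReal.toReal_sub_of_le prob_le_one ENNReal.one_ne_top, ENNReal.toReal_one]
    rfl
  -- Fubini: ∫ g ∂μ = ∫ cdf0 over [0, x]
  have h3 : ∫ ξ, g ξ ∂μ = ∫ t in Set.Icc 0 x, cdf0 μ t := by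
    have hswap := integral_integral_swap
      (f := fun ξ t => Set.indicator {q : ℝ × ℝ | q.1 ≤ q.2} (fun _ => (1:ℝ)) (ξ, t))
      (μ := μ) (ν := τ) hint
    rw [hg]
    rw [hswap]
    refine setIntegral_congr_fun measurableSet_Icc fun t ht => ?_
    have hinner : (fun ξ => Set.indicator {q : ℝ × ℝ | q.1 ≤ q.2} (fun _ => (1:ℝ)) (ξ, t))
        = Set.indicator (Set.Iic t) (fun _ => (1:ℝ)) := by
      ext ξ
      by_cases h : ξ ≤ t <;> simp [Set.indicator, h]
    rw [hinner, integral_indicator_const _ measurableSet_Iic, measureReal_def, smul_eq_mul, mul_one,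
      measure_Iic_eq M μ hμ ht.1]
    rfl
  rw [h2, h3]
  ring

/-- Cross comparison of ski-rental costs at two rental durations `x₁ < x₂` under two
distributions, via the Wasserstein distance. -/
theorem ski_rental_cross_difference
    (M b : ℝ) (hM : 0 < M) (hb : 0 < b)
    (μ ν : Measure ℝ) [IsProbabilityMeasure μ] [IsProbabilityMeasure ν]
    (hμ : μ (Set.Icc 0 M) = 1) (hν : ν (Set.Icc 0 M) = 1)
    (x₁ x₂ : ℝ) (hx₁ : 0 ≤ x₁) (h12 : x₁ < x₂) (hx₂ : x₂ ≤ M) :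
    skiCost b x₂ μ - skiCost b x₁ ν ≤
      b * wassDist M μ ν / (x₂ - x₁) + wassDist M μ ν + (x₂ - x₁) := by
  have hx₂0 : 0 ≤ x₂ := le_trans hx₁ h12.le
  have hx₁M : x₁ ≤ M := le_trans h12.le hx₂
  have hvol : ∀ a c : ℝ, volume (Set.Icc a c) ≠ ⊤ := fun a c => by
    rw [Real.volume_Icc]; exact ENNReal.ofReal_ne_top
  have hFint : ∀ a c : ℝ, IntegrableOn (cdf0 μ) (Set.Icc a c) :=
    fun a c => cdf0_integrableOn μ _ (hvol a c)
  have hHint : ∀ a c : ℝ, IntegrableOn (cdf0 ν) (Set.Icc a c) :=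
    fun a c => cdf0_integrableOn ν _ (hvol a c)
  have hFintO : IntegrableOn (cdf0 μ) (Set.Ioc x₁ x₂) :=
    (hFint x₁ x₂).mono_set Set.Ioc_subset_Icc_self
  have hHintO : IntegrableOn (cdf0 ν) (Set.Ioc x₁ x₂) :=
    (hHint x₁ x₂).mono_set Set.Ioc_subset_Icc_self
  have habs_int : IntegrableOn (fun t => |cdf0 μ t - cdf0 ν t|) (Set.Icc 0 M) :=
    ((hFint 0 M).sub (hHint 0 M)).abs
  have hIμ := skiCost_eq M b μ hμ x₂ hx₂0 hx₂
  have hIν := skiCost_eq M b ν hν x₁ hx₁ hx₁M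
  set D := wassDist M μ ν with hD
  -- split the integral of F over [0,x₂]
  have hsplit : ∫ t in Set.Icc 0 x₂, cdf0 μ t
      = (∫ t in Set.Icc 0 x₁, cdf0 μ t) + ∫ t in Set.Ioc x₁ x₂, cdf0 μ t := by
    rw [← setIntegral_union ?_ measurableSet_Ioc (hFint 0 x₁) hFintO]
    · rw [Set.Icc_union_Ioc_eq_Icc hx₁ h12.le]
    · rw [Set.disjoint_left]
      intro t ht ht'
      exact absurd ht.2 (not_le.2 ht'.1)
  have hFpos : 0 ≤ ∫ t in Set.Ioc x₁ x₂, cdf0 μ t :=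
    setIntegral_nonneg measurableSet_Ioc fun t _ => cdf0_nonneg μ t
  -- bound ∫ H - ∫ F over [0, x₁] by D
  have hHF : (∫ t in Set.Icc 0 x₁, cdf0 ν t) - ∫ t in Set.Icc 0 x₁, cdf0 μ t ≤ D := by
    rw [← integral_sub (hHint 0 x₁) (hFint 0 x₁)]
    calc ∫ t in Set.Icc 0 x₁, (cdf0 ν t - cdf0 μ t)
        ≤ ∫ t in Set.Icc 0 x₁, |cdf0 μ t - cdf0 ν t| := by
          refine setIntegral_mono_on ((hHint 0 x₁).sub (hFint 0 x₁))
            (((hFint 0 x₁).sub (hHint 0 x₁)).abs) measurableSet_Icc fun t _ => ?_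
          rw [abs_sub_comm]
          exact le_abs_self _
      _ ≤ D := by
          refine setIntegral_mono_set habs_int (ae_of_all _ fun t => abs_nonneg _)
            (HasSubset.Subset.eventuallyLE (Set.Icc_subset_Icc_right hx₁M))
  -- key bound: (x₂ - x₁) * (H x₁ - F x₂) ≤ D
  have hkey : (x₂ - x₁) * (cdf0 ν x₁ - cdf0 μ x₂) ≤ D := by
    have hsub : Set.Ioc x₁ x₂ ⊆ Set.Icc 0 M :=
      fun t ht => ⟨le_trans hx₁ ht.1.le, le_trans ht.2 hx₂⟩
    calc (x₂ - x₁) * (cdf0 ν x₁ - cdf0 μ x₂)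
        = ∫ _ in Set.Ioc x₁ x₂, (cdf0 ν x₁ - cdf0 μ x₂) := by
          rw [setIntegral_const, smul_eq_mul, measureReal_def, Real.volume_Ioc,
            ENNReal.toReal_ofReal (by linarith)]
      _ ≤ ∫ t in Set.Ioc x₁ x₂, (cdf0 ν t - cdf0 μ t) := by
          refine setIntegral_mono_on ?_ (hHintO.sub hFintO) measurableSet_Ioc fun t ht => ?_
          · refine integrableOn_const ?_
            rw [Real.volume_Ioc]; exact ENNReal.ofReal_ne_top
          · exact sub_le_sub (cdf0_mono ν ht.1.le) (cdf0_mono μ ht.2)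
      _ ≤ ∫ t in Set.Ioc x₁ x₂, |cdf0 μ t - cdf0 ν t| := by
          refine setIntegral_mono_on (hHintO.sub hFintO)
            ((hFintO.sub hHintO).abs) measurableSet_Ioc fun t _ => ?_
          rw [abs_sub_comm]
          exact le_abs_self _
      _ ≤ D := setIntegral_mono_set habs_int (ae_of_all _ fun t => abs_nonneg _)
            (HasSubset.Subset.eventuallyLE hsub)
  have hd : (0:ℝ) < x₂ - x₁ := by linarith
  have hb1 : b * (1 - cdf0 μ x₂) - b * (1 - cdf0 ν x₁) ≤ b * D / (x₂ - x₁) := by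
    have h1 : cdf0 ν x₁ - cdf0 μ x₂ ≤ D / (x₂ - x₁) := by
      rw [le_div_iff₀ hd]
      linarith [hkey]
    have h2 : b * (cdf0 ν x₁ - cdf0 μ x₂) ≤ b * (D / (x₂ - x₁)) :=
      mul_le_mul_of_nonneg_left h1 hb.le
    rw [mul_div_assoc]
    linarith
  rw [hIμ, hIν, hsplit]
  linarith


end
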